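/- Let K be a perfect field of characteristic p and R = K[x₁,…,x_n]. Let I = ⟨f₁+g₁,…,f_m+g_m, h₁,…,h_l⟩ and I₀ = ⟨f₁,…,f_m⟩ be nonzero ideals contained in 𝔪, where each f_i is nonzero and weighted homogeneous of type (w,d_i), and where wmd(g_i) > d_i for every nonzero g_i. Then for every a ∈ (ℕ⁺)ⁿ one has c^{𝔪(a)}(I) ≥ c^{𝔪(a)}(I₀). -/

import Mathlib

open Filter MvPolynomial

/-- The Frobenius power `I^{[p^e]}`. -/
def frobeniusPower (p e : ℕ) {R : Type*} [CommRing R] (I : Ideal R) : Ideal R :=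
  Ideal.span ((fun f => f ^ p ^ e) '' (I : Set R))

/-- The ν-invariant `ν^𝔞_I(p^e) = max {n ∈ ℕ : Iⁿ ⊄ 𝔞^{[p^e]}}`. -/
noncomputable def nuInv (p : ℕ) {R : Type*} [CommRing R] (𝔞 I : Ideal R) (e : ℕ) : ℕ :=
  sSup {n : ℕ | ¬ I ^ n ≤ frobeniusPower p e 𝔞}

/-- Weighted degree of an exponent vector: `w(a) = Σ wᵢ aᵢ`. -/
def wdeg {n : ℕ} (w : Fin n → ℕ) (a : Fin n →₀ ℕ) : ℕ := ∑ i, w i * a i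

/-- `wmd f = min {w(a) : a ∈ Supp f}`. -/
noncomputable def wmd {n : ℕ} {K : Type*} [CommSemiring K] (w : Fin n → ℕ)
    (f : MvPolynomial (Fin n) K) : ℕ :=
  sInf (wdeg w '' (f.support : Set (Fin n →₀ ℕ)))

/-- The monomial ideal `𝔪(a) = ⟨x₁^{a₁},…,xₙ^{aₙ}⟩`. -/
noncomputable def mIdeal {n : ℕ} (K : Type*) [CommSemiring K] (a : Fin n → ℕ) :
    Ideal (MvPolynomial (Fin n) K) :=
  Ideal.span (Set.range fun i : Fin n => MvPolynomial.X i ^ a i)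

/-- The maximal ideal `𝔪 = ⟨x₁,…,xₙ⟩`. -/
noncomputable def mMax {n : ℕ} (K : Type*) [CommSemiring K] : Ideal (MvPolynomial (Fin n) K) :=
  Ideal.span (Set.range (MvPolynomial.X : Fin n → MvPolynomial (Fin n) K))

section Aux

variable {p e n : ℕ} {K : Type*} [Field K]

lemma wdeg_add {w : Fin n → ℕ} (u v : Fin n →₀ ℕ) : wdeg w (u + v) = wdeg w u + wdeg w v := by
  simp [wdeg, Finsupp.add_apply, mul_add, Finset.sum_add_distrib]

lemma frob_span [CharP K p] (hp : p.Prime) (S : Set (MvPolynomial (Fin n) K)) :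
    frobeniusPower p e (Ideal.span S) = Ideal.span ((fun x => x ^ p ^ e) '' S) := by
  haveI : ExpChar (MvPolynomial (Fin n) K) p := .prime hp
  have hφ : (fun x : MvPolynomial (Fin n) K => x ^ p ^ e)
      = ⇑(iterateFrobenius (MvPolynomial (Fin n) K) p e) :=
    funext fun x => (iterateFrobenius_def p e x).symm
  have h1 : frobeniusPower p e (Ideal.span S)
      = Ideal.map (iterateFrobenius (MvPolynomial (Fin n) K) p e) (Ideal.span S) := by
    unfold frobeniusPower Ideal.map
    rw [hφ]
  rw [h1, Ideal.map_span, hφ]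

lemma frob_mIdeal [CharP K p] (hp : p.Prime) (a : Fin n → ℕ) :
    frobeniusPower p e (mIdeal K a) = mIdeal K (fun i => a i * p ^ e) := by
  rw [mIdeal, frob_span hp, mIdeal]
  congr 1
  ext x
  simp only [Set.mem_image, Set.mem_range]
  constructor
  · rintro ⟨y, ⟨i, rfl⟩, rfl⟩; exact ⟨i, by rw [pow_mul]⟩
  · rintro ⟨i, rfl⟩; exact ⟨X i ^ a i, ⟨i, rfl⟩, by rw [pow_mul]⟩

lemma mIdeal_eq_monomial_span (b : Fin n → ℕ) :
    mIdeal K b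
      = Ideal.span ((fun s => monomial s (1 : K)) ''
          (Set.range fun i => Finsupp.single i (b i))) := by
  unfold mIdeal
  congr 1
  rw [← Set.range_comp]
  have : (fun i : Fin n => (X i : MvPolynomial (Fin n) K) ^ b i)
      = fun i => monomial (Finsupp.single i (b i)) (1 : K) :=
    funext fun i => X_pow_eq_monomial
  rw [this]
  rfl

lemma mem_mIdeal_iff (b : Fin n → ℕ) (x : MvPolynomial (Fin n) K) :
    x ∈ mIdeal K b ↔ ∀ s ∈ x.support, ∃ i, b i ≤ s i := by
  rw [mIdeal_eq_monomial_span, mem_ideal_span_monomial_image]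
  constructor
  · intro hx s hs
    obtain ⟨si, ⟨i, rfl⟩, hle⟩ := hx s hs
    exact ⟨i, Finsupp.single_le_iff.mp hle⟩
  · intro hx s hs
    obtain ⟨i, hi⟩ := hx s hs
    exact ⟨Finsupp.single i (b i), ⟨i, rfl⟩, Finsupp.single_le_iff.mpr hi⟩

-- product of variables is a monomial
lemma prod_X_eq (N : ℕ) (j : Fin N → Fin n) :
    (∏ k, (X (j k) : MvPolynomial (Fin n) K))
      = monomial (∑ k, Finsupp.single (j k) 1) (1 : K) := by
  induction N with
  | zero => simp
  | succ N ih =>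
      rw [Fin.prod_univ_succ, Fin.sum_univ_succ, ih (fun k => j k.succ),
        X, monomial_mul, one_mul]

-- membership of mMax^N in mIdeal
lemma mMax_pow_le (hn : 0 < n) (b : Fin n → ℕ) (hb : ∀ i, 0 < b i) :
    (mMax K) ^ (∑ i, b i) ≤ mIdeal K b := by
  classical
  set N := ∑ i, b i with hN
  rw [mMax, Ideal.span, Submodule.span_pow, ← Ideal.span]
  rw [Ideal.span_le]
  intro x hx
  rw [Set.mem_pow] at hx
  obtain ⟨F, hF⟩ := hx
  choose j hj using fun k => (F k).2
  have hxval : x = monomial (∑ k, Finsupp.single (j k) 1) (1 : K) := by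
    rw [← prod_X_eq]
    rw [← hF, List.prod_ofFn]
    exact Finset.prod_congr rfl fun k _ => (hj k).symm
  have : x ∈ mIdeal K b := by
    rw [mem_mIdeal_iff]
    intro s hs
    have hsx : s = ∑ k, Finsupp.single (j k) 1 := by
      rw [hxval, support_monomial, if_neg one_ne_zero] at hs
      simpa using hs
    by_contra hcon
    push_neg at hcon
    have hsum : ∑ i, s i = N := by
      rw [hsx]
      have h1 : ∀ i, ((∑ k, Finsupp.single (j k) 1 : Fin n →₀ ℕ)) i
          = ∑ k, if j k = i then 1 else 0 := fun i => by
        rw [Finsupp.finset_sum_apply]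
        exact Finset.sum_congr rfl fun k _ => Finsupp.single_apply
      rw [Finset.sum_congr rfl fun i _ => h1 i, Finset.sum_comm]
      have h2 : ∀ k : Fin N, (∑ i, if j k = i then 1 else 0) = 1 := fun k => by simp
      rw [Finset.sum_congr rfl fun k _ => h2 k]
      simp
    have : ∑ i, s i < ∑ i, b i := by
      apply Finset.sum_lt_sum_of_nonempty
      · exact Finset.univ_nonempty_iff.mpr (Fin.pos_iff_nonempty.mp hn)
      · intro i _; exact hcon i
    omega
  exact this

end Aux

section WH

variable {n : ℕ} {K : Type*} [Field K] {w : Fin n → ℕ}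

lemma supp_mul_ge {x y : MvPolynomial (Fin n) K} {D D' : ℕ}
    (hx : ∀ s ∈ x.support, D ≤ wdeg w s) (hy : ∀ s ∈ y.support, D' ≤ wdeg w s) :
    ∀ s ∈ (x * y).support, D + D' ≤ wdeg w s := by
  classical
  intro s hs
  obtain ⟨u, hu, v, hv, rfl⟩ := Finset.mem_add.mp (MvPolynomial.support_mul x y hs)
  rw [wdeg_add]
  exact add_le_add (hx u hu) (hy v hv)

lemma WH_prod (N : ℕ) (F : Fin N → MvPolynomial (Fin n) K) (D : Fin N → ℕ)
    (hF : ∀ k, ∀ s ∈ (F k).support, wdeg w s = D k) :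
    ∀ s ∈ (∏ k, F k).support, wdeg w s = ∑ k, D k := by
  classical
  induction N with
  | zero =>
      intro s hs
      rw [Fin.prod_univ_zero] at hs
      have := MvPolynomial.mem_support_iff.mp hs
      rw [MvPolynomial.coeff_one] at this
      have hs0 : s = 0 := by by_contra hne; exact this (if_neg (fun hh => hne hh.symm))
      simp [hs0, wdeg]
  | succ N ih =>
      intro s hs
      rw [Fin.prod_univ_succ] at hs
      obtain ⟨u, hu, v, hv, rfl⟩ := Finset.mem_add.mp
        (MvPolynomial.support_mul (F 0) (∏ k : Fin N, F k.succ) hs)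
      have hrec := ih (fun k => F k.succ) (fun k => D k.succ) (fun k => hF k.succ) v hv
      rw [wdeg_add, Fin.sum_univ_succ, hF 0 u hu, hrec]

lemma decomp (N : ℕ) (F G : Fin N → MvPolynomial (Fin n) K) (D : Fin N → ℕ)
    (hF : ∀ k, ∀ s ∈ (F k).support, wdeg w s = D k)
    (hG : ∀ k, ∀ s ∈ (G k).support, D k < wdeg w s) :
    ∃ E, ∏ k, (F k + G k) = ∏ k, F k + E ∧ ∀ s ∈ E.support, (∑ k, D k) < wdeg w s := by
  classical
  induction N with
  | zero => exact ⟨0, by simp, by simp⟩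
  | succ N ih =>
      obtain ⟨E', hE'eq, hE'⟩ := ih (fun k => F k.succ) (fun k => G k.succ)
        (fun k => D k.succ) (fun k => hF k.succ) (fun k => hG k.succ)
      set P := ∏ k : Fin N, F k.succ with hP
      refine ⟨G 0 * P + (F 0 + G 0) * E', ?_, ?_⟩
      · rw [Fin.prod_univ_succ, Fin.prod_univ_succ, hE'eq]
        ring
      · intro s hs
        rw [Fin.sum_univ_succ]
        have hs' := MvPolynomial.support_add hs
        rw [Finset.mem_union] at hs'
        rcases hs' with hs1 | hs2
        · have h1 : ∀ u ∈ (G 0).support, D 0 + 1 ≤ wdeg w u := fun u hu => hG 0 u hu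
          have h2 : ∀ v ∈ P.support, (∑ k : Fin N, D k.succ) ≤ wdeg w v := fun v hv =>
            (WH_prod N (fun k => F k.succ) (fun k => D k.succ) (fun k => hF k.succ) v hv).ge
          have := supp_mul_ge h1 h2 s hs1
          omega
        · have h1 : ∀ u ∈ (F 0 + G 0).support, D 0 ≤ wdeg w u := by
            intro u hu
            have := MvPolynomial.support_add hu
            rw [Finset.mem_union] at this
            rcases this with h | h
            · exact (hF 0 u h).ge
            · exact (hG 0 u h).le
          have h2 : ∀ v ∈ E'.support, (∑ k : Fin N, D k.succ) + 1 ≤ wdeg w v := fun v hv => hE' v hv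
          have := supp_mul_ge h1 h2 s hs2
          omega

end WH

/-- Let `K` be a perfect field of characteristic `p`, `R = K[x₁,…,xₙ]`.
Let `I = ⟨f₁+g₁,…,f_m+g_m, h₁,…,h_l⟩` and `I₀ = ⟨f₁,…,f_m⟩` be nonzero ideals contained
in `𝔪`, where each `fᵢ` is nonzero and weighted homogeneous of type `(w, dᵢ)`, and where
`wmd(gᵢ) > dᵢ` for every nonzero `gᵢ`. Then for every `a ∈ (ℕ⁺)ⁿ` one has
`c^{𝔪(a)}(I) ≥ c^{𝔪(a)}(I₀)`. -/
theorem fThreshold_ge_of_wh_part (p : ℕ) [Fact p.Prime] (K : Type*) [Field K]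
    [CharP K p] [PerfectRing K p] (n : ℕ) (w : Fin n → ℕ) (hw : ∀ i, 0 < w i)
    (m l : ℕ) (f g : Fin m → MvPolynomial (Fin n) K) (h : Fin l → MvPolynomial (Fin n) K)
    (I I₀ : Ideal (MvPolynomial (Fin n) K))
    (hI : I = Ideal.span (Set.range (fun i => f i + g i) ∪ Set.range h))
    (hI₀ : I₀ = Ideal.span (Set.range f))
    (hInz : I ≠ ⊥) (hI₀nz : I₀ ≠ ⊥) (hIm : I ≤ mMax K) (hI₀m : I₀ ≤ mMax K)
    (d : Fin m → ℕ)
    (hf : ∀ i, f i ≠ 0)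
    (hWH : ∀ i, ∀ a ∈ (f i).support, wdeg w a = d i)
    (hg : ∀ i, g i ≠ 0 → d i < wmd w (g i))
    (a : Fin n → ℕ) (ha : ∀ i, 0 < a i)
    (c c₀ : ℝ)
    (hc : Tendsto (fun e : ℕ => (nuInv p (mIdeal K a) I e : ℝ) / (p : ℝ) ^ e)
      atTop (nhds c))
    (hc₀ : Tendsto (fun e : ℕ => (nuInv p (mIdeal K a) I₀ e : ℝ) / (p : ℝ) ^ e)
      atTop (nhds c₀)) :
    c₀ ≤ c := by
  have hp : p.Prime := Fact.out
  have key : ∀ e : ℕ, nuInv p (mIdeal K a) I₀ e ≤ nuInv p (mIdeal K a) I e := by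
    intro e
    rcases Nat.eq_zero_or_pos n with h0 | hn
    · exfalso
      apply hInz
      rw [← le_bot_iff]
      refine le_trans hIm ?_
      subst h0
      rw [mMax, Set.range_eq_empty, Ideal.span_empty]
    set b : Fin n → ℕ := fun i => a i * p ^ e with hbdef
    have hbpos : ∀ i, 0 < b i := fun i => Nat.mul_pos (ha i) (pow_pos hp.pos e)
    have hJ : frobeniusPower p e (mIdeal K a) = mIdeal K b := frob_mIdeal hp a
    have hIN : I ^ (∑ i, b i) ≤ frobeniusPower p e (mIdeal K a) := by
      rw [hJ]
      exact le_trans (Ideal.pow_right_mono hIm _) (mMax_pow_le hn b hbpos)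
    have hbdd : BddAbove {k : ℕ | ¬ I ^ k ≤ frobeniusPower p e (mIdeal K a)} := by
      refine ⟨∑ i, b i, fun k hk => ?_⟩
      by_contra hlt
      push_neg at hlt
      exact hk (le_trans (Ideal.pow_le_pow_right hlt.le) hIN)
    have hsub : {k : ℕ | ¬ I₀ ^ k ≤ frobeniusPower p e (mIdeal K a)}
        ⊆ {k : ℕ | ¬ I ^ k ≤ frobeniusPower p e (mIdeal K a)} := by
      intro k hk
      simp only [Set.mem_setOf_eq] at hk ⊢
      intro hIk
      apply hk
      rw [hJ] at hIk ⊢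
      rw [hI₀, Ideal.span, Submodule.span_pow, ← Ideal.span, Ideal.span_le]
      intro x hx
      rw [Set.mem_pow] at hx
      obtain ⟨F, hFx⟩ := hx
      choose idx hidx using fun k' => (F k').2
      have hxt : x = ∏ k' : Fin k, f (idx k') := by
        rw [← hFx, List.prod_ofFn]
        exact (Finset.prod_congr rfl fun k' _ => hidx k').symm
      set Q := ∏ k' : Fin k, (f (idx k') + g (idx k')) with hQdef
      have hQI : Q ∈ I ^ k := by
        have hmem : ∀ k' : Fin k, f (idx k') + g (idx k') ∈ I := fun k' => by
          rw [hI]; exact Ideal.subset_span (Or.inl ⟨idx k', rfl⟩)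
        have := Ideal.prod_mem_prod (s := (Finset.univ : Finset (Fin k))) (I := fun _ : Fin k => I)
          (x := fun k' => f (idx k') + g (idx k')) (fun k' _ => hmem k')
        rwa [Finset.prod_const, Finset.card_univ, Fintype.card_fin] at this
      have hQJ : Q ∈ mIdeal K b := hIk hQI
      obtain ⟨E, hEeq, hE⟩ := decomp k (fun k' => f (idx k')) (fun k' => g (idx k'))
        (fun k' => d (idx k'))
        (fun k' => hWH (idx k'))
        (fun k' s hs => lt_of_lt_of_le
          (hg _ (fun h0 => by simp [h0] at hs))
          (Nat.sInf_le ⟨s, by simpa using hs, rfl⟩))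
      have ht : ∀ s ∈ (∏ k' : Fin k, f (idx k')).support,
          wdeg w s = ∑ k' : Fin k, d (idx k') :=
        WH_prod k (fun k' => f (idx k')) (fun k' => d (idx k')) (fun k' => hWH (idx k'))
      rw [hxt, SetLike.mem_coe, mem_mIdeal_iff]
      intro s hs
      have hcoE : MvPolynomial.coeff s E = 0 := by
        by_contra hne
        have h1 := hE s (MvPolynomial.mem_support_iff.mpr hne)
        have h2 := ht s hs
        omega
      have hsQ : s ∈ Q.support := by
        rw [MvPolynomial.mem_support_iff, hQdef, hEeq, MvPolynomial.coeff_add, hcoE, add_zero]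
        exact MvPolynomial.mem_support_iff.mp hs
      exact (mem_mIdeal_iff b Q).mp hQJ s hsQ
    unfold nuInv
    by_cases hne : {k : ℕ | ¬ I₀ ^ k ≤ frobeniusPower p e (mIdeal K a)}.Nonempty
    · exact csSup_le_csSup hbdd hne hsub
    · rw [Set.not_nonempty_iff_eq_empty] at hne
      rw [hne, csSup_empty]
      exact bot_le
  refine le_of_tendsto_of_tendsto' hc₀ hc fun e => ?_
  have hpe : (0:ℝ) < (p:ℝ) ^ e := pow_pos (by exact_mod_cast hp.pos) e
  gcongr
  exact_mod_cast key e
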